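/- Let I be a stable monomial ideal and x^B a monomial of I of degree d > 0. Define the sequence x^{B_0} = x^B and x^{B_{i+1}} = x^{B_i} / x_{max(B_i)}. If i is maximal with x^{B_i} ∈ I, then x^{B_i} is a minimal monomial generator of I. -/

import Mathlib

open MvPolynomial Finsupp

/-- `I` is a monomial ideal: generated by monomials. -/
def IsMonomialIdeal {n : ℕ} {K : Type*} [Field K]
    (I : Ideal (MvPolynomial (Fin (n + 1)) K)) : Prop :=
  ∃ S : Set (Fin (n + 1) →₀ ℕ),
    I = Ideal.span ((fun A => MvPolynomial.monomial A (1 : K)) '' S)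

/-- `I` is a stable monomial ideal. -/
def IsStable {n : ℕ} {K : Type*} [Field K]
    (I : Ideal (MvPolynomial (Fin (n + 1)) K)) : Prop :=
  IsMonomialIdeal I ∧
    ∀ (A : Fin (n + 1) →₀ ℕ),
      MvPolynomial.monomial A (1 : K) ∈ I →
      ∀ k i : Fin (n + 1), i < k → A k ≠ 0 → (∀ j ∈ A.support, j ≤ k) →
        MvPolynomial.monomial (A - Finsupp.single k 1 + Finsupp.single i 1) (1 : K) ∈ I

/-- `x^A` is a minimal monomial generator of the monomial ideal `I`. -/
def MinGen {n : ℕ} {K : Type*} [Field K]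
    (I : Ideal (MvPolynomial (Fin (n + 1)) K)) (A : Fin (n + 1) →₀ ℕ) : Prop :=
  MvPolynomial.monomial A (1 : K) ∈ I ∧
    ∀ i : Fin (n + 1), A i ≠ 0 →
      MvPolynomial.monomial (A - Finsupp.single i 1) (1 : K) ∉ I

/-- `max(A)`: the largest index of a variable dividing `x^A` (junk value `0` for `A = 0`). -/
noncomputable def maxIdx {n : ℕ} (A : Fin (n + 1) →₀ ℕ) : Fin (n + 1) :=
  WithBot.unbotD 0 A.support.max


lemma maxIdx_mem {n : ℕ} {A : Fin (n + 1) →₀ ℕ} (h : A ≠ 0) : maxIdx A ∈ A.support := by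
  have hne : A.support.Nonempty := Finsupp.support_nonempty_iff.mpr h
  have := Finset.max'_mem A.support hne
  have heq : maxIdx A = A.support.max' hne := by
    unfold maxIdx
    rw [← Finset.coe_max' hne]
    rfl
  rwa [heq]

lemma le_maxIdx {n : ℕ} {A : Fin (n + 1) →₀ ℕ} (h : A ≠ 0) {l : Fin (n + 1)}
    (hl : l ∈ A.support) : l ≤ maxIdx A := by
  have hne : A.support.Nonempty := Finsupp.support_nonempty_iff.mpr h
  have heq : maxIdx A = A.support.max' hne := by
    unfold maxIdx
    rw [← Finset.coe_max' hne]
    rfl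
  rw [heq]
  exact Finset.le_max' _ _ hl

/-- If `x^B ∈ I` has positive degree, and `x^{B_0} = x^B`,
`x^{B_{i+1}} = x^{B_i}/x_{max(B_i)}`, and `i` is maximal with `x^{B_i} ∈ I`,
then `x^{B_i}` is a minimal monomial generator of the stable ideal `I`. -/
theorem stable_chain_min_generator {n : ℕ} {K : Type*} [Field K]
    (I : Ideal (MvPolynomial (Fin (n + 1)) K)) (hI : IsStable I)
    (B : Fin (n + 1) →₀ ℕ) (hB : MvPolynomial.monomial B (1 : K) ∈ I)
    (hBpos : B ≠ 0)
    (Bseq : ℕ → (Fin (n + 1) →₀ ℕ))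
    (h0 : Bseq 0 = B)
    (hstep : ∀ i, Bseq (i + 1) = Bseq i - Finsupp.single (maxIdx (Bseq i)) 1)
    (i : ℕ)
    (hi : MvPolynomial.monomial (Bseq i) (1 : K) ∈ I)
    (himax : ∀ j, MvPolynomial.monomial (Bseq j) (1 : K) ∈ I → j ≤ i) :
    MinGen I (Bseq i) := by
  refine ⟨hi, ?_⟩
  intro j hj hmem
  set A := Bseq i with hA
  have hA0 : A ≠ 0 := by
    intro h
    exact hj (by simp [h])
  set k := maxIdx A with hk
  have hkmem : k ∈ A.support := maxIdx_mem hA0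
  have hAk : A k ≠ 0 := Finsupp.mem_support_iff.mp hkmem
  have hjle : j ≤ k := le_maxIdx hA0 (Finsupp.mem_support_iff.mpr hj)
  have hnext : MvPolynomial.monomial (A - Finsupp.single k 1) (1 : K) ∈ I := by
    rcases eq_or_lt_of_le hjle with hjk | hjk
    · rwa [← hjk]
    · have hsupp : ∀ l ∈ (A - Finsupp.single j 1).support, l ≤ k := by
        intro l hl
        exact le_maxIdx hA0 (Finsupp.support_tsub hl)
      have hCk : ((A - Finsupp.single j 1 : Fin (n + 1) →₀ ℕ)) k ≠ 0 := by
        rw [Finsupp.tsub_apply, Finsupp.single_apply,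
          if_neg (fun h : j = k => (ne_of_lt hjk) h)]
        simpa using hAk
      have := hI.2 _ hmem k j hjk hCk hsupp
      have heq : A - Finsupp.single j 1 - Finsupp.single k 1 + Finsupp.single j 1
          = A - Finsupp.single k 1 := by
        ext l
        have hAj : 1 ≤ A j := Nat.one_le_iff_ne_zero.mpr hj
        have hjk' : j ≠ k := ne_of_lt hjk
        simp only [Finsupp.add_apply, Finsupp.tsub_apply, Finsupp.single_apply]
        by_cases h1 : j = l
        · subst h1
          simp only [if_pos rfl, if_neg (fun h : k = j => hjk' h.symm), if_true]
          omega
        · by_cases h2 : k = l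
          · subst h2
            simp only [if_pos rfl, if_neg h1]
            omega
          · simp only [if_neg h1, if_neg h2]
            omega
      rwa [heq] at this
  have : MvPolynomial.monomial (Bseq (i + 1)) (1 : K) ∈ I := by
    rw [hstep i, ← hA, ← hk]
    exact hnext
  exact absurd (himax _ this) (by omega)
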